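/- For i = 1, …, k let A_i : ℝⁿ → ℝ^{m} be linear maps and d_i ∈ ℝ^{m}, let ᾱ_i(x) = ⟨A_i x, d_i⟩ / ‖A_i x‖², and let g̃(x) = Σ_{i=1}^k ‖d_i − ᾱ_i(x) A_i x‖². Then at every x ∈ ℝⁿ with A_i x ≠ 0 for all i, g̃ is differentiable and its gradient equals the gradient of the fixed-weight objective x ↦ Σ_{i=1}^k ‖d_i − c_i A_i x‖² evaluated with the constants c_i = ᾱ_i(x); explicitly, ∇g̃(x) = −2 Σ_{i=1}^k ᾱ_i(x) A_iᵀ ( d_i − ᾱ_i(x) A_i x ). -/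

import Mathlib

open ContinuousLinearMap in
lemma fixed_term_grad {E F : Type*} [NormedAddCommGroup E] [InnerProductSpace ℝ E]
    [CompleteSpace E] [NormedAddCommGroup F] [InnerProductSpace ℝ F] [CompleteSpace F]
    (A : E →L[ℝ] F) (d : F) (c : ℝ) (x : E) :
    HasFDerivAt (fun y => ‖d - c • A y‖ ^ 2)
      (innerSL ℝ (((-2 * c) : ℝ) • (ContinuousLinearMap.adjoint A) (d - c • A x))) x := by
  have h1 : HasFDerivAt (fun y : E => d - c • A y) (-(c • A)) x := by
    simpa using ((c • A).hasFDerivAt (x := x)).const_sub d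
  have h2 := h1.inner ℝ h1
  have h3 : (fun y : E => ‖d - c • A y‖ ^ 2)
      = fun y => (inner ℝ (d - c • A y) (d - c • A y) : ℝ) :=
    funext fun y => (real_inner_self_eq_norm_sq _).symm
  rw [h3]
  refine h2.congr_fderiv ?_
  ext v
  simp [fderivInnerCLM_apply, inner_smul_left, inner_smul_right,
    ContinuousLinearMap.adjoint_inner_left, inner_sub_left, inner_sub_right,
    real_inner_comm (A v)]
  ring

lemma norm_residual_eq {F : Type*} [NormedAddCommGroup F] [InnerProductSpace ℝ F]
    (u d : F) :
    ‖d - ((inner ℝ u d : ℝ) / ‖u‖ ^ 2) • u‖ ^ 2 = ‖d‖ ^ 2 - (inner ℝ u d : ℝ) ^ 2 / ‖u‖ ^ 2 := by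
  by_cases hu : u = 0
  · simp [hu]
  · have h : (‖u‖ : ℝ) ^ 2 ≠ 0 := pow_ne_zero _ (norm_ne_zero_iff.mpr hu)
    rw [norm_sub_sq_real, inner_smul_right, norm_smul, mul_pow, real_inner_comm d u]
    rw [Real.norm_eq_abs, sq_abs, ← real_inner_self_eq_norm_sq u]
    have hn : (inner ℝ u u : ℝ) = ‖u‖ ^ 2 := real_inner_self_eq_norm_sq u
    have h2 : (inner ℝ u u : ℝ) ≠ 0 := by rw [hn]; exact h
    field_simp
    ring

open ContinuousLinearMap in
lemma var_term_grad {E F : Type*} [NormedAddCommGroup E] [InnerProductSpace ℝ E]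
    [CompleteSpace E] [NormedAddCommGroup F] [InnerProductSpace ℝ F] [CompleteSpace F]
    (A : E →L[ℝ] F) (d : F) (x : E) (hx : A x ≠ 0) :
    HasFDerivAt (fun y => ‖d - ((inner ℝ (A y) d : ℝ) / ‖A y‖ ^ 2) • A y‖ ^ 2)
      (innerSL ℝ ((-2 * ((inner ℝ (A x) d : ℝ) / ‖A x‖ ^ 2)) •
        (ContinuousLinearMap.adjoint A) (d - ((inner ℝ (A x) d : ℝ) / ‖A x‖ ^ 2) • A x))) x := by
  have key : (fun y => ‖d - ((inner ℝ (A y) d : ℝ) / ‖A y‖ ^ 2) • A y‖ ^ 2)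
      = fun y => ‖d‖ ^ 2 - (inner ℝ (A y) d : ℝ) ^ 2 / ‖A y‖ ^ 2 :=
    funext fun y => norm_residual_eq (A y) d
  rw [key]
  set P : E →L[ℝ] ℝ := (innerSL ℝ d).comp A with hPdef
  have hPapp : ∀ y, (inner ℝ (A y) d : ℝ) = P y := fun y => real_inner_comm _ _
  have hP : HasFDerivAt (fun y => (inner ℝ (A y) d : ℝ)) (P : E →L[ℝ] ℝ) x := by
    simpa [funext hPapp] using P.hasFDerivAt (x := x)
  have hN : HasFDerivAt (fun y => (inner ℝ (A y) d : ℝ) ^ 2)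
      ((inner ℝ (A x) d : ℝ) • (P : E →L[ℝ] ℝ) + (inner ℝ (A x) d : ℝ) • P) x := by
    simpa [pow_two] using hP.fun_mul hP
  set D' : E →L[ℝ] ℝ := (fderivInnerCLM ℝ (A x, A x)).comp (A.prod A) with hD'def
  have hD : HasFDerivAt (fun y => (‖A y‖ : ℝ) ^ 2) D' x := by
    have := (A.hasFDerivAt (x := x)).inner ℝ (A.hasFDerivAt (x := x))
    have heq : (fun y : E => (inner ℝ (A y) (A y) : ℝ)) = fun y => (‖A y‖ : ℝ) ^ 2 :=
      funext fun y => real_inner_self_eq_norm_sq _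
    rw [← heq]
    exact this
  have hDx : (‖A x‖ : ℝ) ^ 2 ≠ 0 := pow_ne_zero _ (norm_ne_zero_iff.mpr hx)
  have hInv : HasFDerivAt (fun y => ((‖A y‖ : ℝ) ^ 2)⁻¹)
      ((-(((‖A x‖ : ℝ) ^ 2) ^ 2)⁻¹) • D') x :=
    (hasDerivAt_inv hDx).comp_hasFDerivAt x hD
  have hψ := hN.mul hInv
  have hfull := hψ.const_sub (‖d‖ ^ 2)
  have hdiv : (fun y => ‖d‖ ^ 2 - (inner ℝ (A y) d : ℝ) ^ 2 / ‖A y‖ ^ 2)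
      = fun y => ‖d‖ ^ 2 - (inner ℝ (A y) d : ℝ) ^ 2 * ((‖A y‖ : ℝ) ^ 2)⁻¹ := by
    funext y; rw [div_eq_mul_inv]
  rw [hdiv]
  refine hfull.congr_fderiv ?_
  ext v
  have hAx : (inner ℝ (A x) (A x) : ℝ) = ‖A x‖ ^ 2 := real_inner_self_eq_norm_sq _
  simp [fderivInnerCLM_apply, inner_smul_left, inner_smul_right, inner_sub_left,
    inner_sub_right, ContinuousLinearMap.adjoint_inner_left, real_inner_comm (A v), hAx,
    hPdef, hD'def]
  field_simp
  ring

/-- Gradient of the variable-projection objective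
`gtilde x = Σ_i ‖d_i − αbar_i(x) • A_i x‖²` with `αbar_i(x) = ⟨A_i x, d_i⟩ / ‖A_i x‖²`:
at any `x` with `A_i x ≠ 0` for all `i`, `gtilde` is differentiable with gradient
`G = −2 Σ_i αbar_i(x) Aᵢᵀ (d_i − αbar_i(x) A_i x)`, which is also the gradient at `x` of
the fixed-weight objective `y ↦ Σ_i ‖d_i − c_i • A_i y‖²` with `c_i = αbar_i(x)`. -/
theorem variable_projection_gradient_formula (n m k : ℕ)
    (A : Fin k → (EuclideanSpace ℝ (Fin n) →L[ℝ] EuclideanSpace ℝ (Fin m)))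
    (d : Fin k → EuclideanSpace ℝ (Fin m))
    (αbar : EuclideanSpace ℝ (Fin n) → Fin k → ℝ)
    (hαbar : ∀ x i, αbar x i = (inner ℝ (A i x) (d i) : ℝ) / ‖A i x‖ ^ 2)
    (gtilde : EuclideanSpace ℝ (Fin n) → ℝ)
    (hgtilde : ∀ x, gtilde x = ∑ i, ‖d i - αbar x i • A i x‖ ^ 2)
    (x : EuclideanSpace ℝ (Fin n)) (hx : ∀ i, A i x ≠ 0)
    (G : EuclideanSpace ℝ (Fin n))
    (hG : G = (-2 : ℝ) • ∑ i, αbar x i •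
      (ContinuousLinearMap.adjoint (A i)) (d i - αbar x i • A i x)) :
    HasGradientAt gtilde G x ∧
      HasGradientAt (fun y => ∑ i, ‖d i - αbar x i • A i y‖ ^ 2) G x := by
  set gvec : Fin k → EuclideanSpace ℝ (Fin n) := fun i =>
    (-2 * αbar x i) • (ContinuousLinearMap.adjoint (A i)) (d i - αbar x i • A i x) with hgvec
  have hGsum : G = ∑ i, gvec i := by
    rw [hG, Finset.smul_sum]
    exact Finset.sum_congr rfl fun i _ => by rw [hgvec, smul_smul]
  have htoDual : InnerProductSpace.toDual ℝ (EuclideanSpace ℝ (Fin n)) G = innerSL ℝ G :=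
    ContinuousLinearMap.ext fun v => by
      simp [InnerProductSpace.toDual_apply_apply, innerSL_apply_apply]
  have hsumSL : (∑ i, innerSL ℝ (gvec i)) = innerSL ℝ (∑ i, gvec i) :=
    (map_sum (innerSL ℝ) _ _).symm
  have h2 : HasFDerivAt (fun y => ∑ i, ‖d i - αbar x i • A i y‖ ^ 2)
      (∑ i, innerSL ℝ (gvec i)) x :=
    HasFDerivAt.fun_sum fun i _ => fixed_term_grad (A i) (d i) (αbar x i) x
  have hg1 : ∀ i : Fin k,
      HasFDerivAt (fun y => ‖d i - ((inner ℝ (A i y) (d i) : ℝ) / ‖A i y‖ ^ 2) • A i y‖ ^ 2)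
        (innerSL ℝ (gvec i)) x := by
    intro i
    have h := var_term_grad (A i) (d i) x (hx i)
    rwa [← hαbar x i] at h
  have hgt : gtilde
      = fun y => ∑ i, ‖d i - ((inner ℝ (A i y) (d i) : ℝ) / ‖A i y‖ ^ 2) • A i y‖ ^ 2 := by
    funext y; rw [hgtilde]
    exact Finset.sum_congr rfl fun i _ => by rw [hαbar]
  have h1 : HasFDerivAt gtilde (∑ i, innerSL ℝ (gvec i)) x := by
    rw [hgt]; exact HasFDerivAt.fun_sum fun i _ => hg1 i
  constructor
  · rw [hasGradientAt_iff_hasFDerivAt, htoDual, hGsum, ← hsumSL]; exact h1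
  · rw [hasGradientAt_iff_hasFDerivAt, htoDual, hGsum, ← hsumSL]; exact h2
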